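/- Let α be a terminal-free pattern, let Δ_α be a Janus operating mode for α with head movement indicator ((d'_1,μ'_1),…,(d'_{k'},μ'_{k'})), let D_α := y_{d'_1}·y_{d'_2}·…·y_{d'_{k'}}, and let π := cn(Δ_α) + 1. Then there exists a total mapping co : var(α) → {1, 2, …, π} such that for all x, z ∈ var(α) with x ≠ z: if D_α can be factorised into D_α = β·x·γ·z·γ'·x·δ or into D_α = β·z·γ·x·γ'·z·δ, then co(x) ≠ co(z). -/

import Mathlib

/-! Patterns: variables are natural numbers; a terminal-free pattern is a
nonempty list of variables, with 1-based positions. -/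

/-- The variable at (1-based) position `j` of the pattern `α`. -/
def patAt (α : List ℕ) (j : ℕ) : ℕ := α.getD (j - 1) 0

/-- The set of (1-based) positions of the pattern `α` carrying the variable `x`. -/
def varpos (α : List ℕ) (x : ℕ) : Finset ℕ :=
  (Finset.Icc 1 α.length).filter (fun j => patAt α j = x)

/-- A matching order for the variable `x` in the pattern `α`: a sequence of
`|α|_x − 1` pairs of positions of `x`, each with smaller first component,
whose edge set makes the set of positions of `x` a connected graph. -/
def IsMatchingOrder (α : List ℕ) (x : ℕ) (M : List (ℕ × ℕ)) : Prop :=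
  M.length + 1 = α.count x ∧
  (∀ p ∈ M, p.1 ∈ varpos α x ∧ p.2 ∈ varpos α x ∧ p.1 < p.2) ∧
  ∀ a ∈ varpos α x, ∀ b ∈ varpos α x,
    Relation.ReflTransGen (fun u v => (u, v) ∈ M ∨ (v, u) ∈ M) a b

/-- A complete matching order for `α`: a tuple of `Σ_{x ∈ var(α)} (|α|_x − 1)`
matching positions containing, for every variable `x` of `α`, all the elements
of some matching order for `x` in `α`. -/
def IsCompleteMatchingOrder (α : List ℕ) (C : List (ℕ × ℕ)) : Prop :=
  ∃ M : ℕ → List (ℕ × ℕ),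
    (∀ x ∈ α.toFinset, IsMatchingOrder α x (M x)) ∧
    C.length = ∑ x ∈ α.toFinset, (α.count x - 1) ∧
    ∀ x ∈ α.toFinset, ∀ p ∈ M x, p ∈ C
/-! Janus operating modes. -/

/-- The two head markers: `lam` (λ) for the left head, `rho` (ρ) for the right head. -/
inductive Marker : Type
  | lam
  | rho
deriving DecidableEq

/-- The map `g` from Definition 4: `g(j,j') = (j+1, …, j'−1)` and
`g(j',j) = (j', j'−1, …, j)` for `j < j'`. -/
def gfun (j j' : ℕ) : List ℕ :=
  if j < j' then (List.range (j' - j - 1)).map (fun i => j + 1 + i)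
  else if j' < j then (List.range (j - j' + 1)).map (fun i => j - i)
  else []

/-- The position of the most recent entry with marker `m` among the first `j+1`
entries of `L`; if there is none, the first entry of `L` with marker `m`. -/
def latestEntry (L : List (ℕ × Marker)) (j : ℕ) (m : Marker) : Option ℕ :=
  match ((L.take (j + 1)).filter (fun e => decide (e.2 = m))).getLast? with
  | some e => some e.1
  | none => ((L.filter (fun e => decide (e.2 = m))).head?).map Prod.fst

/-- At every prefix of `L`, the most recent λ-entry is ≤ the most recent ρ-entry
(comparing with the first λ-entry resp. ρ-entry when none has occurred yet). -/
def GoodInterleaving (L : List (ℕ × Marker)) : Prop :=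
  ∀ j < L.length, ∀ pl pr,
    latestEntry L j Marker.lam = some pl → latestEntry L j Marker.rho = some pr → pl ≤ pr

/-- `Δ` is a Janus operating mode for `α`, derived from some complete matching
order `C` for `α` (with `(l_0, r_0) := (0, 0)`): each `D_i` is an interleaving
`D'_i` of `g(l_{i−1}, l_i)` with λ-markers and `g(r_{i−1}, r_i)` with ρ-markers
(preserving the relative order of each, and such that at every prefix the most
recent λ-entry is ≤ the most recent ρ-entry), followed by `(r_i, ρ), (l_i, λ)`. -/
def IsJanusOperatingMode (α : List ℕ) (Δ : List (List (ℕ × Marker))) : Prop :=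
  ∃ C : List (ℕ × ℕ),
    IsCompleteMatchingOrder α C ∧
    Δ.length = C.length ∧
    ∀ i < C.length,
      ∃ D' : List (ℕ × Marker),
        D'.filter (fun e => decide (e.2 = Marker.lam)) =
          (gfun (if i = 0 then 0 else (C.getD (i - 1) (0, 0)).1) (C.getD i (0, 0)).1).map
            (fun p => (p, Marker.lam)) ∧
        D'.filter (fun e => decide (e.2 = Marker.rho)) =
          (gfun (if i = 0 then 0 else (C.getD (i - 1) (0, 0)).2) (C.getD i (0, 0)).2).map
            (fun p => (p, Marker.rho)) ∧
        GoodInterleaving D' ∧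
        Δ.getD i [] =
          D' ++ [((C.getD i (0, 0)).2, Marker.rho), ((C.getD i (0, 0)).1, Marker.lam)]

open Classical in
/-- For a string `D` of variables (0-based indexing), `sVal D i` is the number of
variables `x ≠ D_i` having an occurrence both strictly before and strictly after
position `i` in `D`. -/
noncomputable def sVal (D : List ℕ) (i : ℕ) : ℕ :=
  (D.toFinset.filter (fun x =>
    x ≠ D.getD i 0 ∧ (∃ j, j < i ∧ D.getD j 0 = x) ∧
    ∃ j', i < j' ∧ j' < D.length ∧ D.getD j' 0 = x)).card

/-- The head movement indicator of a Janus operating mode: the concatenation of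
its tuples `D_1, …, D_k`. -/
def hmi (Δ : List (List (ℕ × Marker))) : List (ℕ × Marker) := Δ.flatten

/-- The string of variables `D_α = y_{d'_1} · y_{d'_2} · … · y_{d'_{k'}}`
associated with the head movement indicator of `Δ` and the pattern `α`. -/
def hmiVars (α : List ℕ) (Δ : List (List (ℕ × Marker))) : List ℕ :=
  (hmi Δ).map (fun e => patAt α e.1)

/-- The counter number of a Janus operating mode `Δ` for `α`:
`cn(Δ) = max{s_i | 1 ≤ i ≤ k'}`. -/
noncomputable def cnOf (α : List ℕ) (Δ : List (List (ℕ × Marker))) : ℕ :=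
  (Finset.range (hmiVars α Δ).length).sup (sVal (hmiVars α Δ))

/-- The variable distance of `α`: the smallest `k ≥ 0` such that for every
variable `x`, every factorisation `α = β·x·γ·x·δ` with `|γ|_x = 0` satisfies
`|var(γ)| ≤ k`. -/
noncomputable def vd (α : List ℕ) : ℕ :=
  sInf {k : ℕ | ∀ x : ℕ, ∀ β γ δ : List ℕ,
    α = β ++ [x] ++ γ ++ [x] ++ δ → γ.count x = 0 → γ.toFinset.card ≤ k}
/-- `z` occurs strictly between two occurrences of `x` in `D`, or vice versa. -/
def ConflictD (D : List ℕ) (x z : ℕ) : Prop :=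
  ∃ p i q : ℕ, p < i ∧ i < q ∧ q < D.length ∧
    ((D.getD p 0 = x ∧ D.getD i 0 = z ∧ D.getD q 0 = x) ∨
     (D.getD p 0 = z ∧ D.getD i 0 = x ∧ D.getD q 0 = z))

lemma conflictD_symm {D : List ℕ} {x z : ℕ} (h : ConflictD D x z) : ConflictD D z x := by
  obtain ⟨p, i, q, h1, h2, h3, h4⟩ := h
  exact ⟨p, i, q, h1, h2, h3, h4.symm⟩

lemma getD_len_append (l r : List ℕ) (x : ℕ) : (l ++ x :: r).getD l.length 0 = x := by
  induction l with
  | nil => rfl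
  | cons a t ih => simpa using ih

lemma indexOf_le_of_getD (D : List ℕ) (i : ℕ) (h : i < D.length) :
    D.idxOf (D.getD i 0) ≤ i := by
  induction D generalizing i with
  | nil => simp at h
  | cons a t ih =>
    cases i with
    | zero => simp
    | succ n =>
      simp only [List.getD_cons_succ]
      rw [List.idxOf_cons]
      have := ih n (by simpa using h)
      rcases Bool.eq_false_or_eq_true (a == t.getD n 0) with hax | hax <;> rw [hax]
      · exact Nat.zero_le _
      · exact Nat.succ_le_succ this

lemma getD_indexOf (D : List ℕ) (x : ℕ) (h : x ∈ D) : D.getD (D.idxOf x) 0 = x := by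
  rw [List.getD_eq_getElem _ _ (List.idxOf_lt_length_iff.mpr h)]
  exact List.getElem_idxOf _

lemma conflictD_mem {D : List ℕ} {x z : ℕ} (hC : ConflictD D x z) : x ∈ D ∧ z ∈ D := by
  obtain ⟨p, i, q, h1, h2, h3, h | h⟩ := hC
  · constructor
    · rw [← h.1, List.getD_eq_getElem _ _ (by omega)]; exact List.getElem_mem _
    · rw [← h.2.1, List.getD_eq_getElem _ _ (by omega)]; exact List.getElem_mem _
  · constructor
    · rw [← h.2.1, List.getD_eq_getElem _ _ (by omega)]; exact List.getElem_mem _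
    · rw [← h.1, List.getD_eq_getElem _ _ (by omega)]; exact List.getElem_mem _

/-- If `x` and `z` conflict and `i` is the first occurrence of `z`, then `x` occurs
strictly after `i`. -/
lemma conflict_after {D : List ℕ} {x z : ℕ} (hC : ConflictD D x z) {i : ℕ}
    (hz : ∀ m, m < D.length → D.getD m 0 = z → i ≤ m) :
    ∃ j', i < j' ∧ j' < D.length ∧ D.getD j' 0 = x := by
  obtain ⟨p, i0, q, h1, h2, h3, h | h⟩ := hC
  · have := hz i0 (by omega) h.2.1
    exact ⟨q, by omega, h3, h.2.2⟩
  · have := hz p (by omega) h.1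
    exact ⟨i0, by omega, by omega, h.2.1⟩

noncomputable def colG (D : List ℕ) : ℕ → ℕ
  | i => sInf {c | 1 ≤ c ∧ ∀ j, j < i → D.idxOf (D.getD j 0) = j →
      (D.getD j 0 ≠ D.getD i 0 ∧ ConflictD D (D.getD j 0) (D.getD i 0)) → colG D j ≠ c}
  termination_by i => i

lemma colG_mem (D : List ℕ) (i : ℕ) : colG D i ∈ {c | 1 ≤ c ∧ ∀ j, j < i →
    D.idxOf (D.getD j 0) = j →
    (D.getD j 0 ≠ D.getD i 0 ∧ ConflictD D (D.getD j 0) (D.getD i 0)) → colG D j ≠ c} := by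
  rw [colG]
  apply Nat.sInf_mem
  refine ⟨1 + (Finset.range i).sup (colG D), by omega, fun j hj _ _ hcol => ?_⟩
  have := Finset.le_sup (f := colG D) (Finset.mem_range.mpr hj)
  omega

lemma one_le_colG (D : List ℕ) (i : ℕ) : 1 ≤ colG D i := (colG_mem D i).1

lemma colG_le (D : List ℕ) (i : ℕ) (hi : i < D.length)
    (hfirst : D.idxOf (D.getD i 0) = i) :
    colG D i ≤ (Finset.range D.length).sup (sVal D) + 1 := by
  classical
  set cn := (Finset.range D.length).sup (sVal D) with hcn
  set S := (Finset.range i).filter (fun j => D.idxOf (D.getD j 0) = j ∧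
    D.getD j 0 ≠ D.getD i 0 ∧ ConflictD D (D.getD j 0) (D.getD i 0)) with hS
  have hcardS : S.card ≤ cn := by
    have hsub : S.image (fun j => D.getD j 0) ⊆
        (D.toFinset.filter (fun x => x ≠ D.getD i 0 ∧ (∃ j, j < i ∧ D.getD j 0 = x) ∧
          ∃ j', i < j' ∧ j' < D.length ∧ D.getD j' 0 = x)) := by
      intro x hx
      simp only [Finset.mem_image] at hx
      obtain ⟨j, hjS, rfl⟩ := hx
      rw [hS, Finset.mem_filter, Finset.mem_range] at hjS
      obtain ⟨hji, hjfirst, hne, hconf⟩ := hjS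
      refine Finset.mem_filter.mpr ⟨?_, hne, ⟨j, hji, rfl⟩, ?_⟩
      · have hjlen : j < D.length := lt_trans hji hi
        rw [List.mem_toFinset, List.getD_eq_getElem _ _ hjlen]
        exact List.getElem_mem _
      · refine conflict_after hconf (fun m hm hzm => ?_)
        have h1 := indexOf_le_of_getD D m hm
        rw [hzm] at h1
        omega
    have hinj : Set.InjOn (fun j => D.getD j 0) S := by
      intro a ha b hb hab
      have ha' := (Finset.mem_filter.mp ha).2.1
      have hb' := (Finset.mem_filter.mp hb).2.1
      rw [← ha', ← hb']
      simp only at hab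
      rw [hab]
    calc S.card = (S.image (fun j => D.getD j 0)).card :=
          (Finset.card_image_of_injOn hinj).symm
      _ ≤ _ := Finset.card_le_card hsub
      _ = sVal D i := by rw [sVal]
      _ ≤ cn := Finset.le_sup (Finset.mem_range.mpr hi)
  have hexists : ∃ c ∈ Finset.Icc 1 (cn + 1), c ∉ S.image (colG D) := by
    by_contra hcon
    push_neg at hcon
    have h1 := Finset.card_le_card (fun c hc => hcon c hc)
    have h2 := le_trans h1 (le_trans Finset.card_image_le hcardS)
    rw [Nat.card_Icc] at h2
    omega
  obtain ⟨c, hc1, hc2⟩ := hexists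
  rw [Finset.mem_Icc] at hc1
  have hcmem : colG D i ≤ c := by
    rw [colG]
    refine Nat.sInf_le ⟨hc1.1, fun j hj hjf hpair hcol => hc2 ?_⟩
    exact Finset.mem_image.mpr ⟨j,
      Finset.mem_filter.mpr ⟨Finset.mem_range.mpr hj, hjf, hpair.1, hpair.2⟩, hcol⟩
  omega

lemma colG_ne (D : List ℕ) (x z : ℕ) (hx : x ∈ D) (hz : z ∈ D) (hne : x ≠ z)
    (hlt : D.idxOf x < D.idxOf z) (hconf : ConflictD D x z) :
    colG D (D.idxOf x) ≠ colG D (D.idxOf z) := by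
  have hmem := (colG_mem D (D.idxOf z)).2
  have hgx : D.getD (D.idxOf x) 0 = x := getD_indexOf D x hx
  have hgz : D.getD (D.idxOf z) 0 = z := getD_indexOf D z hz
  refine hmem (D.idxOf x) hlt (by rw [hgx]) ⟨?_, ?_⟩
  · rw [hgx, hgz]; exact hne
  · rw [hgx, hgz]; exact hconf

lemma factor_conflict (D β γ γ' δ : List ℕ) (x z : ℕ)
    (h : D = β ++ [x] ++ γ ++ [z] ++ γ' ++ [x] ++ δ) : ConflictD D x z := by
  refine ⟨β.length, β.length + 1 + γ.length, β.length + 1 + γ.length + 1 + γ'.length,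
    by omega, by omega, ?_, Or.inl ⟨?_, ?_, ?_⟩⟩
  · rw [h]; simp; omega
  · have h2 : D = β ++ x :: (γ ++ [z] ++ γ' ++ [x] ++ δ) := by rw [h]; simp
    rw [h2]; exact getD_len_append ..
  · have h2 : D = (β ++ [x] ++ γ) ++ z :: (γ' ++ [x] ++ δ) := by rw [h]; simp
    have hl : β.length + 1 + γ.length = (β ++ [x] ++ γ).length := by simp; omega
    rw [h2, hl]; exact getD_len_append ..
  · have h2 : D = (β ++ [x] ++ γ ++ [z] ++ γ') ++ x :: δ := by rw [h]; simp
    have hl : β.length + 1 + γ.length + 1 + γ'.length =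
        (β ++ [x] ++ γ ++ [z] ++ γ').length := by simp; omega
    rw [h2, hl]; exact getD_len_append ..

/-- the Claim in the proof of Theorem 1 of the paper. Let
`α` be a terminal-free pattern, `Δ` a Janus operating mode for `α`, `D_α` the
string of variables associated with its head movement indicator, and
`π := cn(Δ) + 1`. Then there is a total mapping `co : var(α) → {1, …, π}` such
that for all distinct `x, z ∈ var(α)`: if `D_α` can be factorised as
`D_α = β·x·γ·z·γ'·x·δ` or as `D_α = β·z·γ·x·γ'·z·δ`, then `co(x) ≠ co(z)`. -/
theorem statement10 (α : List ℕ) (hα : α ≠ [])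
    (Δ : List (List (ℕ × Marker))) (hΔ : IsJanusOperatingMode α Δ) :
    ∃ co : ℕ → ℕ,
      (∀ x ∈ α.toFinset, 1 ≤ co x ∧ co x ≤ cnOf α Δ + 1) ∧
      ∀ x ∈ α.toFinset, ∀ z ∈ α.toFinset, x ≠ z →
        ((∃ β γ γ' δ : List ℕ,
            hmiVars α Δ = β ++ [x] ++ γ ++ [z] ++ γ' ++ [x] ++ δ) ∨
         (∃ β γ γ' δ : List ℕ,
            hmiVars α Δ = β ++ [z] ++ γ ++ [x] ++ γ' ++ [z] ++ δ)) →
        co x ≠ co z := by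
  classical
  set D := hmiVars α Δ with hD
  have hcn : cnOf α Δ = (Finset.range D.length).sup (sVal D) := rfl
  refine ⟨fun z => if z ∈ D then colG D (D.idxOf z) else 1, fun x _ => ?_, ?_⟩
  · by_cases hx : x ∈ D
    · simp only [hx, if_pos]
      refine ⟨one_le_colG D _, ?_⟩
      rw [hcn]
      have h1 : D.idxOf x < D.length := List.idxOf_lt_length_iff.mpr hx
      exact colG_le D (D.idxOf x) h1 (by rw [getD_indexOf D x hx])
    · simp only [hx, if_neg, if_false]
      exact ⟨le_refl 1, by omega⟩
  · intro x hx z hz hne hfact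
    have hconf : ConflictD D x z := by
      rcases hfact with ⟨β, γ, γ', δ, hf⟩ | ⟨β, γ, γ', δ, hf⟩
      · exact factor_conflict D β γ γ' δ x z hf
      · exact conflictD_symm (factor_conflict D β γ γ' δ z x hf)
    obtain ⟨hxD, hzD⟩ := conflictD_mem hconf
    simp only [hxD, hzD, if_pos]
    have hneq : D.idxOf x ≠ D.idxOf z := fun hEq => hne (by
      rw [← getD_indexOf D x hxD, hEq, getD_indexOf D z hzD])
    rcases lt_or_gt_of_ne hneq with h | h
    · exact colG_ne D x z hxD hzD hne h hconf
    · exact (colG_ne D z x hzD hxD hne.symm h (conflictD_symm hconf)).symm
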